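/- arXiv:2511.11474 — 2 statements merged into one kernel-verified Lean document; each statement's English description precedes it below -/
import Mathlib

section
/- Let φ, ψ ∈ L²([t₀,T]) and f(t,τ) = φ(t)ψ(τ)𝟙(τ ≤ t) + ψ(t)φ(τ)𝟙(t < τ). For ε > 0 define the averaging S_ε f(t,τ) = (1/(4ε²)) ∫_{|t−θ|≤ε, |τ−ϑ|≤ε} f(θ,ϑ)dθdϑ, where f is extended by zero outside [t₀,T]². Then lim_{ε→0} ∫_{t₀}^{T} S_ε f(t,t) dt = ∫_{t₀}^{T} φ(t)ψ(t) dt. -/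
open MeasureTheory Set Filter Topology
open scoped ENNReal

lemma memL2_mul_integrable {α : Type*} [MeasurableSpace α] {μ : Measure α} {u v : α → ℝ}
    (hu : MemLp u 2 μ) (hv : MemLp v 2 μ) : Integrable (fun x => u x * v x) μ := by
  have h := MeasureTheory.L2.integrable_inner (𝕜 := ℝ) (hu.toLp u) (hv.toLp v)
  refine (integrable_congr ?_).mp h
  filter_upwards [hu.coeFn_toLp, hv.coeFn_toLp] with x hx1 hx2
  simp [RCLike.inner_apply, hx1, hx2, mul_comm]

lemma integral_mul_le_eLpNorm {α : Type*} [MeasurableSpace α] {μ : Measure α} {u v : α → ℝ}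
    (hu : MemLp u 2 μ) (hv : MemLp v 2 μ) :
    |∫ x, u x * v x ∂μ| ≤ (eLpNorm u 2 μ).toReal * (eLpNorm v 2 μ).toReal := by
  have h := abs_real_inner_le_norm (hu.toLp u) (hv.toLp v)
  rw [L2.inner_def] at h
  have he : ∫ a, (inner ℝ (hu.toLp u a) (hv.toLp v a) : ℝ) ∂μ = ∫ x, u x * v x ∂μ := by
    refine integral_congr_ae ?_
    filter_upwards [hu.coeFn_toLp, hv.coeFn_toLp] with x hx1 hx2
    simp [RCLike.inner_apply, hx1, hx2, mul_comm]
  rw [he, Lp.norm_toLp, Lp.norm_toLp] at h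
  exact h

lemma eLpNorm_translate (u : ℝ → ℝ) (hu : AEStronglyMeasurable u (volume : Measure ℝ)) (a : ℝ) :
    eLpNorm (fun x => u (x + a)) 2 volume = eLpNorm u 2 volume :=
  eLpNorm_comp_measurePreserving hu (measurePreserving_add_right volume a)

lemma aesm_translate {u : ℝ → ℝ} (hu : AEStronglyMeasurable u (volume : Measure ℝ)) (a : ℝ) :
    AEStronglyMeasurable (fun x => u (x + a)) (volume : Measure ℝ) :=
  hu.comp_measurePreserving (measurePreserving_add_right volume a)

lemma memℒp_translate {u : ℝ → ℝ} (hu : MemLp u 2 (volume : Measure ℝ)) (a : ℝ) :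
    MemLp (fun x => u (x + a)) 2 (volume : Measure ℝ) :=
  ⟨aesm_translate hu.1 a, by rw [eLpNorm_translate u hu.1 a]; exact hu.2⟩

lemma integrable_translate {u : ℝ → ℝ} (hu : Integrable u (volume : Measure ℝ)) (a : ℝ) :
    Integrable (fun x => u (x + a)) (volume : Measure ℝ) :=
  ((measurePreserving_add_right volume a).integrable_comp hu.1).mpr hu

lemma tendsto_eLpNorm_translate {u : ℝ → ℝ} (hu : MemLp u 2 (volume : Measure ℝ)) :
    Tendsto (fun a : ℝ => eLpNorm (fun x => u (x + a) - u x) 2 volume) (𝓝 0) (𝓝 0) := by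
  rw [ENNReal.tendsto_nhds_zero]
  intro ε hε
  set e : ℝ≥0∞ := min ε 1 with he_def
  have he0 : e ≠ 0 := by
    simp only [he_def, ne_eq, min_eq_iff]
    intro h; rcases h with ⟨h, -⟩ | ⟨h, -⟩
    · exact hε.ne' h
    · exact one_ne_zero h
  have heT : e ≠ ⊤ := by
    simp only [he_def, ne_eq, min_eq_top]
    rintro ⟨-, h⟩; exact ENNReal.one_ne_top h
  have he4 : e / 4 ≠ 0 := by
    simp [ENNReal.div_eq_zero_iff, he0]
  obtain ⟨g, gcs, hfg, gc, -⟩ :=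
    hu.exists_hasCompactSupport_eLpNorm_sub_le (by norm_num : (2 : ℝ≥0∞) ≠ ⊤) he4
  obtain ⟨R, hR⟩ := gcs.isBounded.subset_closedBall 0
  set s : Set ℝ := Metric.closedBall (0 : ℝ) (|R| + 1) with hs_def
  set V : ℝ≥0∞ := (volume s) ^ ((2 : ℝ≥0∞).toReal)⁻¹ with hV_def
  have hVT : V ≠ ⊤ := by
    refine (ENNReal.rpow_lt_top_of_nonneg (by norm_num) ?_).ne
    exact (measure_closedBall_lt_top).ne
  have heh : e / 2 ≠ 0 := by simp [ENNReal.div_eq_zero_iff, he0]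
  have hehT : e / 2 ≠ ⊤ := by
    simp [ENNReal.div_eq_top, heT]
  set c : ℝ := (e / 2).toReal / (V.toReal + 1) with hc_def
  have hc : 0 < c := by
    apply div_pos (ENNReal.toReal_pos heh hehT)
    positivity
  have hgu : UniformContinuous g := gcs.uniformContinuous_of_continuous gc
  obtain ⟨r, hr, hrc⟩ := Metric.uniformContinuous_iff.mp hgu c hc
  filter_upwards [Metric.ball_mem_nhds (0 : ℝ) (by positivity : (0:ℝ) < min r 1)] with a ha
  simp only [Metric.mem_ball, Real.dist_eq, sub_zero] at ha
  have haru : |a| < r := lt_of_lt_of_le ha (min_le_left _ _)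
  have ha1 : |a| < 1 := lt_of_lt_of_le ha (min_le_right _ _)
  -- decompose
  have hum : AEStronglyMeasurable u volume := hu.1
  have hgm : AEStronglyMeasurable g volume := gc.aestronglyMeasurable
  set d1 : ℝ → ℝ := fun x => u (x + a) - g (x + a) with hd1
  set d2 : ℝ → ℝ := fun x => g (x + a) - g x with hd2
  set d3 : ℝ → ℝ := fun x => g x - u x with hd3
  have hdm1 : AEStronglyMeasurable d1 volume :=
    (aesm_translate hum a).sub (aesm_translate hgm a)
  have hdm2 : AEStronglyMeasurable d2 volume := (aesm_translate hgm a).sub hgm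
  have hdm3 : AEStronglyMeasurable d3 volume := hgm.sub hum
  have hkey : (fun x => u (x + a) - u x) = d1 + (d2 + d3) := by
    funext x
    simp only [hd1, hd2, hd3, Pi.add_apply]
    ring
  have h1 : eLpNorm d1 2 volume ≤ e / 4 := by
    have : eLpNorm d1 2 volume = eLpNorm (u - g) 2 volume := by
      have : d1 = fun x => (u - g) (x + a) := by funext x; simp [hd1]
      rw [this, eLpNorm_translate (u - g) (hum.sub hgm)]
    rw [this]; exact hfg
  have h3 : eLpNorm d3 2 volume ≤ e / 4 := by
    have : d3 = -(u - g) := by funext x; simp [hd3]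
    rw [this, eLpNorm_neg]; exact hfg
  have h2 : eLpNorm d2 2 volume ≤ e / 2 := by
    have hd2s : d2 = s.indicator d2 := by
      funext x
      rcases em (x ∈ s) with hx | hx
      · rw [Set.indicator_of_mem hx]
      · rw [Set.indicator_of_notMem hx]
        have hx' : |R| + 1 < |x| := by
          simpa [hs_def, Real.dist_eq, not_le] using hx
        have hxg : g x = 0 := by
          apply image_eq_zero_of_notMem_tsupport
          intro hmem
          have := hR hmem
          simp only [Metric.mem_closedBall, Real.dist_eq, sub_zero] at this
          have : |x| ≤ |R| := le_trans this (le_abs_self R)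
          linarith
        have hxag : g (x + a) = 0 := by
          apply image_eq_zero_of_notMem_tsupport
          intro hmem
          have h' := hR hmem
          simp only [Metric.mem_closedBall, Real.dist_eq, sub_zero] at h'
          have h'' : |x| - |a| ≤ |x + a| := by
            have := abs_sub_abs_le_abs_sub x (-a)
            simpa [sub_neg_eq_add] using this
          have : |x + a| ≤ |R| := le_trans h' (le_abs_self R)
          linarith
        simp [hd2, hxg, hxag]
    rw [hd2s, eLpNorm_indicator_eq_eLpNorm_restrict (measurableSet_closedBall)]
    have hb : ∀ᵐ x ∂(volume.restrict s), ‖d2 x‖ ≤ c := by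
      apply Eventually.of_forall
      intro x
      have : dist (x + a) x < r := by
        simp only [Real.dist_eq, add_sub_cancel_left]
        exact haru
      have := hrc this
      simp only [Real.dist_eq, hd2, Real.norm_eq_abs]
      exact le_of_lt this
    calc eLpNorm d2 2 (volume.restrict s)
        ≤ (volume.restrict s) univ ^ ((2:ℝ≥0∞).toReal)⁻¹ * ENNReal.ofReal c :=
          eLpNorm_le_of_ae_bound hb
      _ = V * ENNReal.ofReal c := by
          rw [Measure.restrict_apply_univ]
      _ ≤ e / 2 := by
          have hV' : V = ENNReal.ofReal V.toReal := (ENNReal.ofReal_toReal hVT).symm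
          rw [hV', ← ENNReal.ofReal_mul ENNReal.toReal_nonneg]
          have : V.toReal * c ≤ (e/2).toReal := by
            rw [hc_def]
            rw [mul_div_assoc']
            rw [div_le_iff₀ (by positivity)]
            have h1 : V.toReal * (e/2).toReal ≤ (V.toReal + 1) * (e/2).toReal := by
              apply mul_le_mul_of_nonneg_right (by linarith) ENNReal.toReal_nonneg
            linarith
          calc ENNReal.ofReal (V.toReal * c) ≤ ENNReal.ofReal (e/2).toReal :=
                ENNReal.ofReal_le_ofReal this
            _ = e / 2 := ENNReal.ofReal_toReal hehT
  calc eLpNorm (fun x => u (x + a) - u x) 2 volume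
      = eLpNorm (d1 + (d2 + d3)) 2 volume := by rw [hkey]
    _ ≤ eLpNorm d1 2 volume + eLpNorm (d2 + d3) 2 volume :=
        eLpNorm_add_le hdm1 (hdm2.add hdm3) (by norm_num)
    _ ≤ eLpNorm d1 2 volume + (eLpNorm d2 2 volume + eLpNorm d3 2 volume) := by
        gcongr
        exact eLpNorm_add_le hdm2 hdm3 (by norm_num)
    _ ≤ e / 4 + (e / 2 + e / 4) := by gcongr
    _ ≤ e := by
        have h4 : (e / 4).toReal = e.toReal / 4 := by simp [ENNReal.toReal_div]
        have h2' : (e / 2).toReal = e.toReal / 2 := by simp [ENNReal.toReal_div]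
        have hfin : e / 4 + (e / 2 + e / 4) ≠ ⊤ := by
          simp [ENNReal.add_eq_top, ENNReal.div_eq_top, heT]
        refine (ENNReal.toReal_le_toReal hfin heT).mp ?_
        rw [ENNReal.toReal_add, ENNReal.toReal_add, h4, h2'] <;>
          first
            | linarith [ENNReal.toReal_nonneg (a := e)]
            | simp [ENNReal.add_eq_top, ENNReal.div_eq_top, heT]
    _ ≤ ε := min_le_left _ _

lemma tendsto_eLpNorm_translate_toReal {u : ℝ → ℝ} (hu : MemLp u 2 (volume : Measure ℝ)) :
    Tendsto (fun a : ℝ => (eLpNorm (fun x => u (x + a) - u x) 2 volume).toReal) (𝓝 0) (𝓝 0) := by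
  have h := (ENNReal.tendsto_toReal (by norm_num : (0:ℝ≥0∞) ≠ ⊤)).comp
    (tendsto_eLpNorm_translate hu)
  simpa [Function.comp_def] using h

lemma shift_Icc_integral (g : ℝ → ℝ) (c l u : ℝ) (h : l ≤ u) :
    ∫ x in Icc l u, g x = ∫ x in Icc (l - c) (u - c), g (x + c) := by
  rw [integral_Icc_eq_integral_Ioc, integral_Icc_eq_integral_Ioc,
    ← intervalIntegral.integral_of_le h, ← intervalIntegral.integral_of_le (by linarith),
    intervalIntegral.integral_comp_add_right g c]
  norm_num

theorem stmt_8 (t₀ T : ℝ) (ht : t₀ < T)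
    (φ ψ : Lp ℝ 2 (volume.restrict (Icc t₀ T)))
    (f : ℝ → ℝ → ℝ)
    (hf : ∀ t τ : ℝ, f t τ =
      φ t * ψ τ * (if τ ≤ t then 1 else 0) + ψ t * φ τ * (if t < τ then 1 else 0)) :
    Tendsto
      (fun ε : ℝ =>
        ∫ t in Icc t₀ T,
          (1 / (4 * ε ^ 2)) *
            ∫ θ in Icc (t - ε) (t + ε), ∫ ϑ in Icc (t - ε) (t + ε),
              (if θ ∈ Icc t₀ T ∧ ϑ ∈ Icc t₀ T then f θ ϑ else 0))
      (nhdsWithin 0 (Ioi 0))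
      (nhds (∫ t in Icc t₀ T, φ t * ψ t)) := by
  classical
  have hI : MeasurableSet (Icc t₀ T) := measurableSet_Icc
  haveI hfinI : IsFiniteMeasure (volume.restrict (Icc t₀ T)) :=
    ⟨by rw [Measure.restrict_apply_univ]; exact measure_Icc_lt_top⟩
  set Φ : ℝ → ℝ := (Icc t₀ T).indicator (⇑φ) with hΦdef
  set Ψ : ℝ → ℝ := (Icc t₀ T).indicator (⇑ψ) with hΨdef
  have mΦ : Measurable Φ := ((Lp.stronglyMeasurable φ).measurable).indicator hI
  have mΨ : Measurable Ψ := ((Lp.stronglyMeasurable ψ).measurable).indicator hI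
  have hΦ2 : MemLp Φ 2 volume := (memLp_indicator_iff_restrict hI).mpr (Lp.memLp φ)
  have hΨ2 : MemLp Ψ 2 volume := (memLp_indicator_iff_restrict hI).mpr (Lp.memLp ψ)
  have hΦ1 : Integrable Φ volume := by
    rw [hΦdef, integrable_indicator_iff hI]
    exact (Lp.memLp φ).integrable (by norm_num)
  have hΨ1 : Integrable Ψ volume := by
    rw [hΨdef, integrable_indicator_iff hI]
    exact (Lp.memLp ψ).integrable (by norm_num)
  set K : ℝ → ℝ → ℝ := fun θ ϑ => if ϑ ≤ θ then Φ θ * Ψ ϑ else Ψ θ * Φ ϑ with hKdef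
  have mK : Measurable fun p : ℝ × ℝ => K p.1 p.2 := by
    apply Measurable.ite (measurableSet_le measurable_snd measurable_fst)
    · exact (mΦ.comp measurable_fst).mul (mΨ.comp measurable_snd)
    · exact (mΨ.comp measurable_fst).mul (mΦ.comp measurable_snd)
  have hK : ∀ θ ϑ : ℝ, (if θ ∈ Icc t₀ T ∧ ϑ ∈ Icc t₀ T then f θ ϑ else 0) = K θ ϑ := by
    intro θ ϑ
    have eΦm : ∀ x : ℝ, x ∈ Icc t₀ T → Φ x = φ x := fun x hx => indicator_of_mem hx _
    have eΦn : ∀ x : ℝ, x ∉ Icc t₀ T → Φ x = 0 := fun x hx => indicator_of_notMem hx _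
    have eΨm : ∀ x : ℝ, x ∈ Icc t₀ T → Ψ x = ψ x := fun x hx => indicator_of_mem hx _
    have eΨn : ∀ x : ℝ, x ∉ Icc t₀ T → Ψ x = 0 := fun x hx => indicator_of_notMem hx _
    simp only [hKdef]
    rcases le_or_gt ϑ θ with h | h
    · rw [if_pos h]
      by_cases hθ : θ ∈ Icc t₀ T <;> by_cases hϑ : ϑ ∈ Icc t₀ T
      · rw [if_pos ⟨hθ, hϑ⟩, hf θ ϑ, if_pos h, if_neg (not_lt.mpr h), eΦm θ hθ, eΨm ϑ hϑ]; ring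
      · rw [if_neg (by tauto), eΨn ϑ hϑ]; ring
      · rw [if_neg (by tauto), eΦn θ hθ]; ring
      · rw [if_neg (by tauto), eΦn θ hθ]; ring
    · rw [if_neg (not_le.mpr h)]
      by_cases hθ : θ ∈ Icc t₀ T <;> by_cases hϑ : ϑ ∈ Icc t₀ T
      · rw [if_pos ⟨hθ, hϑ⟩, hf θ ϑ, if_neg (not_le.mpr h), if_pos h, eΨm θ hθ, eΦm ϑ hϑ]; ring
      · rw [if_neg (by tauto), eΦn ϑ hϑ]; ring
      · rw [if_neg (by tauto), eΨn θ hθ]; ring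
      · rw [if_neg (by tauto), eΨn θ hθ]; ring
  have hKb : ∀ θ ϑ : ℝ, ‖K θ ϑ‖ ≤ ‖Φ θ‖ * ‖Ψ ϑ‖ + ‖Ψ θ‖ * ‖Φ ϑ‖ := by
    intro θ ϑ
    rcases le_or_gt ϑ θ with h | h
    · have : K θ ϑ = Φ θ * Ψ ϑ := by simp [hKdef, h]
      rw [this, norm_mul]
      exact le_add_of_nonneg_right (by positivity)
    · have : K θ ϑ = Ψ θ * Φ ϑ := by simp [hKdef, not_le.mpr h]
      rw [this, norm_mul]
      exact le_add_of_nonneg_left (by positivity)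
  -- the limit candidate
  set L : ℝ := ∫ t in Icc t₀ T, φ t * ψ t with hLdef
  -- quantities controlling translation
  set NΦ : ℝ := (eLpNorm Φ 2 volume).toReal with hNΦdef
  set NΨ : ℝ := (eLpNorm Ψ 2 volume).toReal with hNΨdef
  set ωΦ : ℝ → ℝ := fun a => (eLpNorm (fun x => Φ (x + a) - Φ x) 2 volume).toReal with hωΦdef
  set ωΨ : ℝ → ℝ := fun a => (eLpNorm (fun x => Ψ (x + a) - Ψ x) 2 volume).toReal with hωΨdef
  have hωΦ : Tendsto ωΦ (𝓝 0) (𝓝 0) := tendsto_eLpNorm_translate_toReal hΦ2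
  have hωΨ : Tendsto ωΨ (𝓝 0) (𝓝 0) := tendsto_eLpNorm_translate_toReal hΨ2
  have hωΦnn : ∀ a, 0 ≤ ωΦ a := fun a => ENNReal.toReal_nonneg
  have hωΨnn : ∀ a, 0 ≤ ωΨ a := fun a => ENNReal.toReal_nonneg
  have hNΦnn : 0 ≤ NΦ := ENNReal.toReal_nonneg
  have hNΨnn : 0 ≤ NΨ := ENNReal.toReal_nonneg
  -- key bound on F a b - L
  have hFb : ∀ a b : ℝ,
      |(∫ t in Icc t₀ T, K (a + t) (b + t)) - L| ≤
        (ωΦ a * NΨ + ωΨ a * NΦ) + (NΦ * ωΨ b + NΨ * ωΦ b) := by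
    intro a b
    have hswap : ∀ (u : ℝ → ℝ) (c : ℝ), (fun t => u (c + t)) = fun t => u (t + c) := by
      intro u c; funext t; rw [add_comm]
    set μI := volume.restrict (Icc t₀ T) with hμIdef
    have hΦI : MemLp Φ 2 μI := hΦ2.mono_measure Measure.restrict_le_self
    have hΨI : MemLp Ψ 2 μI := hΨ2.mono_measure Measure.restrict_le_self
    have trΦ : ∀ c : ℝ, MemLp (fun t => Φ (c + t)) 2 μI := fun c => by
      rw [hswap Φ c]; exact (memℒp_translate hΦ2 c).mono_measure Measure.restrict_le_self
    have trΨ : ∀ c : ℝ, MemLp (fun t => Ψ (c + t)) 2 μI := fun c => by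
      rw [hswap Ψ c]; exact (memℒp_translate hΨ2 c).mono_measure Measure.restrict_le_self
    have eΦtr : ∀ c : ℝ, (eLpNorm (fun t => Φ (c + t)) 2 μI).toReal ≤ NΦ := by
      intro c
      apply ENNReal.toReal_mono hΦ2.2.ne
      calc eLpNorm (fun t => Φ (c + t)) 2 μI
          ≤ eLpNorm (fun t => Φ (c + t)) 2 volume :=
            eLpNorm_mono_measure _ Measure.restrict_le_self
        _ = eLpNorm Φ 2 volume := by rw [hswap Φ c]; exact eLpNorm_translate Φ hΦ2.1 c
    have eΨtr : ∀ c : ℝ, (eLpNorm (fun t => Ψ (c + t)) 2 μI).toReal ≤ NΨ := by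
      intro c
      apply ENNReal.toReal_mono hΨ2.2.ne
      calc eLpNorm (fun t => Ψ (c + t)) 2 μI
          ≤ eLpNorm (fun t => Ψ (c + t)) 2 volume :=
            eLpNorm_mono_measure _ Measure.restrict_le_self
        _ = eLpNorm Ψ 2 volume := by rw [hswap Ψ c]; exact eLpNorm_translate Ψ hΨ2.1 c
    have eΦI : (eLpNorm Φ 2 μI).toReal ≤ NΦ :=
      ENNReal.toReal_mono hΦ2.2.ne (eLpNorm_mono_measure _ Measure.restrict_le_self)
    have eΨI : (eLpNorm Ψ 2 μI).toReal ≤ NΨ :=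
      ENNReal.toReal_mono hΨ2.2.ne (eLpNorm_mono_measure _ Measure.restrict_le_self)
    have eΦd : ∀ c : ℝ, (eLpNorm (fun t => Φ (c + t) - Φ t) 2 μI).toReal ≤ ωΦ c := by
      intro c
      apply ENNReal.toReal_mono ((memℒp_translate hΦ2 c).sub hΦ2).2.ne
      calc eLpNorm (fun t => Φ (c + t) - Φ t) 2 μI
          ≤ eLpNorm (fun t => Φ (c + t) - Φ t) 2 volume :=
            eLpNorm_mono_measure _ Measure.restrict_le_self
        _ = eLpNorm (fun t => Φ (t + c) - Φ t) 2 volume := by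
            congr 1; funext t; rw [add_comm]
    have eΨd : ∀ c : ℝ, (eLpNorm (fun t => Ψ (c + t) - Ψ t) 2 μI).toReal ≤ ωΨ c := by
      intro c
      apply ENNReal.toReal_mono ((memℒp_translate hΨ2 c).sub hΨ2).2.ne
      calc eLpNorm (fun t => Ψ (c + t) - Ψ t) 2 μI
          ≤ eLpNorm (fun t => Ψ (c + t) - Ψ t) 2 volume :=
            eLpNorm_mono_measure _ Measure.restrict_le_self
        _ = eLpNorm (fun t => Ψ (t + c) - Ψ t) 2 volume := by
            congr 1; funext t; rw [add_comm]
    have hL1 : L = ∫ t in Icc t₀ T, Φ t * Ψ t := by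
      rw [hLdef]
      apply integral_congr_ae
      filter_upwards [ae_restrict_mem hI] with t htmem
      rw [hΦdef, hΨdef, indicator_of_mem htmem, indicator_of_mem htmem]
    rcases le_or_gt b a with hba | hab
    · have hFab : (∫ t in Icc t₀ T, K (a + t) (b + t))
          = ∫ t in Icc t₀ T, Φ (a + t) * Ψ (b + t) := by
        apply integral_congr_ae
        apply Eventually.of_forall
        intro t
        simp only [hKdef]
        rw [if_pos (by linarith : b + t ≤ a + t)]
      have i1 : Integrable (fun t => (Φ (a + t) - Φ t) * Ψ (b + t)) μI :=
        memL2_mul_integrable ((trΦ a).sub hΦI) (trΨ b)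
      have i2 : Integrable (fun t => Φ t * (Ψ (b + t) - Ψ t)) μI :=
        memL2_mul_integrable hΦI ((trΨ b).sub hΨI)
      have j1 : Integrable (fun t => Φ (a + t) * Ψ (b + t)) μI :=
        memL2_mul_integrable (trΦ a) (trΨ b)
      have j0 : Integrable (fun t => Φ t * Ψ t) μI := memL2_mul_integrable hΦI hΨI
      have hsplit : (∫ t in Icc t₀ T, Φ (a + t) * Ψ (b + t)) - (∫ t in Icc t₀ T, Φ t * Ψ t)
          = (∫ t in Icc t₀ T, (Φ (a + t) - Φ t) * Ψ (b + t))
            + (∫ t in Icc t₀ T, Φ t * (Ψ (b + t) - Ψ t)) := by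
        rw [← integral_add i1 i2, ← integral_sub j1 j0]
        apply integral_congr_ae
        apply Eventually.of_forall
        intro t
        ring
      rw [hFab, hL1, hsplit]
      have c1 := integral_mul_le_eLpNorm ((trΦ a).sub hΦI) (trΨ b)
      have c2 := integral_mul_le_eLpNorm hΦI ((trΨ b).sub hΨI)
      have b1 : |∫ t in Icc t₀ T, (Φ (a + t) - Φ t) * Ψ (b + t)| ≤ ωΦ a * NΨ := by
        refine le_trans c1 ?_
        exact mul_le_mul (eΦd a) (eΨtr b) ENNReal.toReal_nonneg (hωΦnn a)
      have b2 : |∫ t in Icc t₀ T, Φ t * (Ψ (b + t) - Ψ t)| ≤ NΦ * ωΨ b := by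
        refine le_trans c2 ?_
        exact mul_le_mul eΦI (eΨd b) ENNReal.toReal_nonneg hNΦnn
      have habs := abs_add_le (∫ t in Icc t₀ T, (Φ (a + t) - Φ t) * Ψ (b + t))
        (∫ t in Icc t₀ T, Φ t * (Ψ (b + t) - Ψ t))
      have hextra1 : 0 ≤ ωΨ a * NΦ := mul_nonneg (hωΨnn a) hNΦnn
      have hextra2 : 0 ≤ NΨ * ωΦ b := mul_nonneg hNΨnn (hωΦnn b)
      linarith
    · have hFab : (∫ t in Icc t₀ T, K (a + t) (b + t))
          = ∫ t in Icc t₀ T, Ψ (a + t) * Φ (b + t) := by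
        apply integral_congr_ae
        apply Eventually.of_forall
        intro t
        simp only [hKdef]
        rw [if_neg (by simp only [not_le]; linarith : ¬ (b + t ≤ a + t))]
      have hL2 : L = ∫ t in Icc t₀ T, Ψ t * Φ t := by
        rw [hL1]
        apply integral_congr_ae
        apply Eventually.of_forall
        intro t
        ring
      have i1 : Integrable (fun t => (Ψ (a + t) - Ψ t) * Φ (b + t)) μI :=
        memL2_mul_integrable ((trΨ a).sub hΨI) (trΦ b)
      have i2 : Integrable (fun t => Ψ t * (Φ (b + t) - Φ t)) μI :=
        memL2_mul_integrable hΨI ((trΦ b).sub hΦI)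
      have j1 : Integrable (fun t => Ψ (a + t) * Φ (b + t)) μI :=
        memL2_mul_integrable (trΨ a) (trΦ b)
      have j0 : Integrable (fun t => Ψ t * Φ t) μI := memL2_mul_integrable hΨI hΦI
      have hsplit : (∫ t in Icc t₀ T, Ψ (a + t) * Φ (b + t)) - (∫ t in Icc t₀ T, Ψ t * Φ t)
          = (∫ t in Icc t₀ T, (Ψ (a + t) - Ψ t) * Φ (b + t))
            + (∫ t in Icc t₀ T, Ψ t * (Φ (b + t) - Φ t)) := by
        rw [← integral_add i1 i2, ← integral_sub j1 j0]
        apply integral_congr_ae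
        apply Eventually.of_forall
        intro t
        ring
      rw [hFab, hL2, hsplit]
      have c1 := integral_mul_le_eLpNorm ((trΨ a).sub hΨI) (trΦ b)
      have c2 := integral_mul_le_eLpNorm hΨI ((trΦ b).sub hΦI)
      have b1 : |∫ t in Icc t₀ T, (Ψ (a + t) - Ψ t) * Φ (b + t)| ≤ ωΨ a * NΦ := by
        refine le_trans c1 ?_
        exact mul_le_mul (eΨd a) (eΦtr b) ENNReal.toReal_nonneg (hωΨnn a)
      have b2 : |∫ t in Icc t₀ T, Ψ t * (Φ (b + t) - Φ t)| ≤ NΨ * ωΦ b := by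
        refine le_trans c2 ?_
        exact mul_le_mul eΨI (eΦd b) ENNReal.toReal_nonneg hNΨnn
      have habs := abs_add_le (∫ t in Icc t₀ T, (Ψ (a + t) - Ψ t) * Φ (b + t))
        (∫ t in Icc t₀ T, Ψ t * (Φ (b + t) - Φ t))
      have hextra1 : 0 ≤ ωΦ a * NΨ := mul_nonneg (hωΦnn a) hNΨnn
      have hextra2 : 0 ≤ NΦ * ωΨ b := mul_nonneg hNΦnn (hωΨnn b)
      linarith
  -- measurability of F
  have mF : StronglyMeasurable (fun p : ℝ × ℝ => ∫ t in Icc t₀ T, K (p.1 + t) (p.2 + t)) := by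
    apply StronglyMeasurable.integral_prod_right
      (f := fun (p : ℝ × ℝ) (t : ℝ) => K (p.1 + t) (p.2 + t))
    exact (mK.comp ((measurable_fst.fst.add measurable_snd).prodMk
      (measurable_fst.snd.add measurable_snd))).stronglyMeasurable
  -- identity for positive ε
  have hId : ∀ ε : ℝ, 0 < ε →
      (∫ t in Icc t₀ T, (1 / (4 * ε ^ 2)) *
          ∫ θ in Icc (t - ε) (t + ε), ∫ ϑ in Icc (t - ε) (t + ε),
            (if θ ∈ Icc t₀ T ∧ ϑ ∈ Icc t₀ T then f θ ϑ else 0))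
      = (1 / (4 * ε ^ 2)) *
          ∫ a in Icc (-ε) ε, ∫ b in Icc (-ε) ε, ∫ t in Icc t₀ T, K (a + t) (b + t) := by
    intro ε hε
    set J := Icc (-ε) ε with hJdef
    set μI := volume.restrict (Icc t₀ T) with hμIdef
    set νJ := (volume.restrict J).prod (volume.restrict J) with hνJdef
    -- step 1: pointwise substitution
    have step1 : ∀ t : ℝ,
        (∫ θ in Icc (t - ε) (t + ε), ∫ ϑ in Icc (t - ε) (t + ε),
          (if θ ∈ Icc t₀ T ∧ ϑ ∈ Icc t₀ T then f θ ϑ else 0))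
        = ∫ a in J, ∫ b in J, K (a + t) (b + t) := by
      intro t
      simp only [hK]
      have he1 : t - ε - t = -ε := by ring
      have he2 : t + ε - t = ε := by ring
      have h1 := shift_Icc_integral (fun θ => ∫ ϑ in Icc (t - ε) (t + ε), K θ ϑ) t
        (t - ε) (t + ε) (by linarith)
      rw [h1, he1, he2]
      apply integral_congr_ae
      apply Eventually.of_forall
      intro a
      have h2 := shift_Icc_integral (fun ϑ => K (a + t) ϑ) t (t - ε) (t + ε) (by linarith)
      simp only
      rw [h2, he1, he2]
    -- integrability facts
    have mW : Measurable fun q : ℝ × (ℝ × ℝ) => K (q.2.1 + q.1) (q.2.2 + q.1) :=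
      mK.comp ((measurable_snd.fst.add measurable_fst).prodMk
        (measurable_snd.snd.add measurable_fst))
    have hdom : ∀ t : ℝ, Integrable
        (fun p : ℝ × ℝ => ‖Φ (p.1 + t)‖ * ‖Ψ (p.2 + t)‖ + ‖Ψ (p.1 + t)‖ * ‖Φ (p.2 + t)‖) νJ := by
      intro t
      apply Integrable.add
      · exact Integrable.mul_prod ((integrable_translate hΦ1 t).norm.restrict)
          ((integrable_translate hΨ1 t).norm.restrict)
      · exact Integrable.mul_prod ((integrable_translate hΨ1 t).norm.restrict)
          ((integrable_translate hΦ1 t).norm.restrict)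
    have hint_i : ∀ t : ℝ, Integrable (fun p : ℝ × ℝ => K (p.1 + t) (p.2 + t)) νJ := by
      intro t
      refine (hdom t).mono' ?_ ?_
      · exact (mK.comp ((measurable_fst.add measurable_const).prodMk
          (measurable_snd.add measurable_const))).aestronglyMeasurable
      · exact Eventually.of_forall fun p => hKb _ _
    have hW : Integrable (fun q : ℝ × (ℝ × ℝ) => K (q.2.1 + q.1) (q.2.2 + q.1)) (μI.prod νJ) := by
      rw [integrable_prod_iff mW.aestronglyMeasurable]
      constructor
      · exact Eventually.of_forall fun t => hint_i t
      · set CΦ : ℝ := ∫ x, ‖Φ x‖ with hCΦdef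
        set CΨ : ℝ := ∫ x, ‖Ψ x‖ with hCΨdef
        have hb : ∀ t : ℝ, (∫ p : ℝ × ℝ, ‖K (p.1 + t) (p.2 + t)‖ ∂νJ) ≤ CΦ * CΨ + CΨ * CΦ := by
          intro t
          have hmono : (∫ p : ℝ × ℝ, ‖K (p.1 + t) (p.2 + t)‖ ∂νJ)
              ≤ ∫ p : ℝ × ℝ, (‖Φ (p.1 + t)‖ * ‖Ψ (p.2 + t)‖
                + ‖Ψ (p.1 + t)‖ * ‖Φ (p.2 + t)‖) ∂νJ :=
            integral_mono_of_nonneg (Eventually.of_forall fun p => norm_nonneg _)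
              (hdom t) (Eventually.of_forall fun p => hKb _ _)
          have int1 : Integrable (fun p : ℝ × ℝ => ‖Φ (p.1 + t)‖ * ‖Ψ (p.2 + t)‖) νJ :=
            Integrable.mul_prod ((integrable_translate hΦ1 t).norm.restrict)
              ((integrable_translate hΨ1 t).norm.restrict)
          have int2 : Integrable (fun p : ℝ × ℝ => ‖Ψ (p.1 + t)‖ * ‖Φ (p.2 + t)‖) νJ :=
            Integrable.mul_prod ((integrable_translate hΨ1 t).norm.restrict)
              ((integrable_translate hΦ1 t).norm.restrict)
          have hIφ : ∫ a in J, ‖Φ (a + t)‖ ≤ CΦ := by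
            calc ∫ a in J, ‖Φ (a + t)‖ ≤ ∫ a, ‖Φ (a + t)‖ :=
                  setIntegral_le_integral (integrable_translate hΦ1 t).norm
                    (Eventually.of_forall fun x => norm_nonneg _)
              _ = CΦ := integral_add_right_eq_self (fun x => ‖Φ x‖) t
          have hIψ : ∫ a in J, ‖Ψ (a + t)‖ ≤ CΨ := by
            calc ∫ a in J, ‖Ψ (a + t)‖ ≤ ∫ a, ‖Ψ (a + t)‖ :=
                  setIntegral_le_integral (integrable_translate hΨ1 t).norm
                    (Eventually.of_forall fun x => norm_nonneg _)
              _ = CΨ := integral_add_right_eq_self (fun x => ‖Ψ x‖) t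
          have nn1 : (0:ℝ) ≤ ∫ a in J, ‖Φ (a + t)‖ := integral_nonneg fun x => norm_nonneg _
          have nn2 : (0:ℝ) ≤ ∫ a in J, ‖Ψ (a + t)‖ := integral_nonneg fun x => norm_nonneg _
          have nnCΦ : 0 ≤ CΦ := le_trans nn1 hIφ
          have nnCΨ : 0 ≤ CΨ := le_trans nn2 hIψ
          calc (∫ p : ℝ × ℝ, ‖K (p.1 + t) (p.2 + t)‖ ∂νJ)
              ≤ ∫ p : ℝ × ℝ, (‖Φ (p.1 + t)‖ * ‖Ψ (p.2 + t)‖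
                  + ‖Ψ (p.1 + t)‖ * ‖Φ (p.2 + t)‖) ∂νJ := hmono
            _ = (∫ a in J, ‖Φ (a + t)‖) * (∫ b in J, ‖Ψ (b + t)‖)
                + (∫ a in J, ‖Ψ (a + t)‖) * (∫ b in J, ‖Φ (b + t)‖) := by
                rw [integral_add int1 int2, hνJdef,
                  integral_prod_mul (fun a => ‖Φ (a + t)‖) (fun b => ‖Ψ (b + t)‖),
                  integral_prod_mul (fun a => ‖Ψ (a + t)‖) (fun b => ‖Φ (b + t)‖)]
            _ ≤ CΦ * CΨ + CΨ * CΦ := by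
                apply add_le_add
                · exact mul_le_mul hIφ hIψ nn2 nnCΦ
                · exact mul_le_mul hIψ hIφ nn1 nnCΨ
        refine (integrable_const (CΦ * CΨ + CΨ * CΦ)).mono' ?_ (Eventually.of_forall fun t => ?_)
        · exact (StronglyMeasurable.integral_prod_right
            (f := fun (t : ℝ) (p : ℝ × ℝ) => ‖K (p.1 + t) (p.2 + t)‖)
            (mW.norm.stronglyMeasurable)).aestronglyMeasurable
        · rw [Real.norm_eq_abs, abs_of_nonneg (integral_nonneg fun p => norm_nonneg _)]
          exact hb t
    -- Fubini chain
    have chain : (∫ t in Icc t₀ T, ∫ a in J, ∫ b in J, K (a + t) (b + t))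
        = ∫ a in J, ∫ b in J, ∫ t in Icc t₀ T, K (a + t) (b + t) := by
      have e1 : (∫ t in Icc t₀ T, ∫ a in J, ∫ b in J, K (a + t) (b + t))
          = ∫ t, ∫ p : ℝ × ℝ, K (p.1 + t) (p.2 + t) ∂νJ ∂μI := by
        apply integral_congr_ae
        apply Eventually.of_forall
        intro t
        exact integral_integral (hint_i t)
      have e2 : (∫ t, ∫ p : ℝ × ℝ, K (p.1 + t) (p.2 + t) ∂νJ ∂μI)
          = ∫ p : ℝ × ℝ, ∫ t, K (p.1 + t) (p.2 + t) ∂μI ∂νJ :=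
        integral_integral_swap
          (f := fun (t : ℝ) (p : ℝ × ℝ) => K (p.1 + t) (p.2 + t)) hW
      have e3 : (∫ p : ℝ × ℝ, ∫ t, K (p.1 + t) (p.2 + t) ∂μI ∂νJ)
          = ∫ a in J, ∫ b in J, ∫ t in Icc t₀ T, K (a + t) (b + t) := by
        exact integral_prod (fun p : ℝ × ℝ => ∫ t, K (p.1 + t) (p.2 + t) ∂μI)
          (hW.integral_prod_right)
      rw [e1, e2, e3]
    calc (∫ t in Icc t₀ T, (1 / (4 * ε ^ 2)) *
          ∫ θ in Icc (t - ε) (t + ε), ∫ ϑ in Icc (t - ε) (t + ε),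
            (if θ ∈ Icc t₀ T ∧ ϑ ∈ Icc t₀ T then f θ ϑ else 0))
        = ∫ t in Icc t₀ T, (1 / (4 * ε ^ 2)) * ∫ a in J, ∫ b in J, K (a + t) (b + t) := by
          refine integral_congr_ae (Eventually.of_forall fun t => ?_)
          dsimp only
          rw [step1 t]
      _ = (1 / (4 * ε ^ 2)) * ∫ t in Icc t₀ T, ∫ a in J, ∫ b in J, K (a + t) (b + t) :=
          integral_const_mul _ _
      _ = (1 / (4 * ε ^ 2)) * ∫ a in J, ∫ b in J, ∫ t in Icc t₀ T, K (a + t) (b + t) := by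
          rw [chain]
  -- limit
  have hLim : Tendsto (fun ε : ℝ => (1 / (4 * ε ^ 2)) *
      ∫ a in Icc (-ε) ε, ∫ b in Icc (-ε) ε, ∫ t in Icc t₀ T, K (a + t) (b + t))
      (𝓝[>] (0:ℝ)) (𝓝 L) := by
    rw [Metric.tendsto_nhdsWithin_nhds]
    intro η hη
    have hP : Tendsto (fun x => ωΦ x * NΨ + ωΨ x * NΦ) (𝓝 (0:ℝ)) (𝓝 0) := by
      have := (hωΦ.mul_const NΨ).add (hωΨ.mul_const NΦ)
      simpa using this
    have hQ : Tendsto (fun x => NΦ * ωΨ x + NΨ * ωΦ x) (𝓝 (0:ℝ)) (𝓝 0) := by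
      have := (hωΨ.const_mul NΦ).add (hωΦ.const_mul NΨ)
      simpa using this
    have hP' : ∀ᶠ x in 𝓝 (0:ℝ), ωΦ x * NΨ + ωΨ x * NΦ < η/4 :=
      hP.eventually_lt_const (by positivity)
    have hQ' : ∀ᶠ x in 𝓝 (0:ℝ), NΦ * ωΨ x + NΨ * ωΦ x < η/4 :=
      hQ.eventually_lt_const (by positivity)
    obtain ⟨r1, hr1, h1⟩ := Metric.eventually_nhds_iff.mp hP'
    obtain ⟨r2, hr2, h2⟩ := Metric.eventually_nhds_iff.mp hQ'
    refine ⟨min r1 r2, by positivity, ?_⟩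
    intro ε hεmem hεd
    have hε : (0:ℝ) < ε := hεmem
    rw [Real.dist_eq, sub_zero] at hεd
    have hεr1 : ε < r1 := lt_of_le_of_lt (le_abs_self ε) (lt_of_lt_of_le hεd (min_le_left _ _))
    have hεr2 : ε < r2 := lt_of_le_of_lt (le_abs_self ε) (lt_of_lt_of_le hεd (min_le_right _ _))
    have key : ∀ a ∈ Icc (-ε) ε, ∀ b ∈ Icc (-ε) ε,
        |(∫ t in Icc t₀ T, K (a + t) (b + t)) - L| < η/2 := by
      intro a ha b hb
      have haa : |a| ≤ ε := abs_le.mpr ⟨ha.1, ha.2⟩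
      have hbb : |b| ≤ ε := abs_le.mpr ⟨hb.1, hb.2⟩
      have hPa := h1 (show dist a 0 < r1 by
        rw [Real.dist_eq, sub_zero]; exact lt_of_le_of_lt haa hεr1)
      have hQb := h2 (show dist b 0 < r2 by
        rw [Real.dist_eq, sub_zero]; exact lt_of_le_of_lt hbb hεr2)
      have := hFb a b
      linarith
    have hvolJlt : volume (Icc (-ε) ε) < ⊤ := measure_Icc_lt_top
    haveI hfinJ : IsFiniteMeasure (volume.restrict (Icc (-ε) ε)) :=
      ⟨by rw [Measure.restrict_apply_univ]; exact hvolJlt⟩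
    have hvolJ : (volume (Icc (-ε) ε)).toReal = 2*ε := by
      rw [Real.volume_Icc, ENNReal.toReal_ofReal (by linarith)]; ring
    have mGa : ∀ a : ℝ, AEStronglyMeasurable
        (fun b => ∫ t in Icc t₀ T, K (a + t) (b + t)) (volume.restrict (Icc (-ε) ε)) := by
      intro a
      exact ((mF.measurable.comp (measurable_const.prodMk measurable_id)).stronglyMeasurable
        ).aestronglyMeasurable
    have hintb : ∀ a ∈ Icc (-ε) ε, Integrable
        (fun b => ∫ t in Icc t₀ T, K (a + t) (b + t)) (volume.restrict (Icc (-ε) ε)) := by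
      intro a ha
      refine (integrable_const (|L| + η/2)).mono' (mGa a) ?_
      rw [ae_restrict_iff' measurableSet_Icc]
      refine Eventually.of_forall fun b hb => ?_
      have hk := key a ha b hb
      rw [Real.norm_eq_abs]
      calc |∫ t in Icc t₀ T, K (a + t) (b + t)|
          = |L + ((∫ t in Icc t₀ T, K (a + t) (b + t)) - L)| := by congr 1; ring
        _ ≤ |L| + |(∫ t in Icc t₀ T, K (a + t) (b + t)) - L| := abs_add_le _ _
        _ ≤ |L| + η/2 := by linarith
    have hInner : ∀ a ∈ Icc (-ε) ε,
        |(∫ b in Icc (-ε) ε, ∫ t in Icc t₀ T, K (a + t) (b + t)) - (2*ε)*L|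
          ≤ (η/2) * (2*ε) := by
      intro a ha
      have heq : (∫ b in Icc (-ε) ε, ∫ t in Icc t₀ T, K (a + t) (b + t)) - (2*ε)*L
          = ∫ b in Icc (-ε) ε, ((∫ t in Icc t₀ T, K (a + t) (b + t)) - L) := by
        rw [integral_sub (hintb a ha) (integrable_const L), integral_const,
          measureReal_restrict_apply_univ, measureReal_def, hvolJ, smul_eq_mul]
      rw [heq]
      have hbnd := norm_setIntegral_le_of_norm_le_const (μ := volume) (s := Icc (-ε) ε)
        (C := η/2) hvolJlt
        (fun b hb => by rw [Real.norm_eq_abs]; exact (key a ha b hb).le)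
      rw [Real.norm_eq_abs, measureReal_def, hvolJ] at hbnd
      exact hbnd
    have mGsm : AEStronglyMeasurable
        (fun a => ∫ b in Icc (-ε) ε, ∫ t in Icc t₀ T, K (a + t) (b + t))
        (volume.restrict (Icc (-ε) ε)) := by
      refine (StronglyMeasurable.integral_prod_right
        (f := fun (a : ℝ) (b : ℝ) => ∫ t in Icc t₀ T, K (a + t) (b + t)) ?_).aestronglyMeasurable
      exact mF
    have hinth : Integrable
        (fun a => ∫ b in Icc (-ε) ε, ∫ t in Icc t₀ T, K (a + t) (b + t))
        (volume.restrict (Icc (-ε) ε)) := by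
      refine (integrable_const ((|L| + η/2) * (2*ε))).mono' mGsm ?_
      rw [ae_restrict_iff' measurableSet_Icc]
      refine Eventually.of_forall fun a ha => ?_
      have hbnd := norm_setIntegral_le_of_norm_le_const (μ := volume) (s := Icc (-ε) ε)
        (C := |L| + η/2) hvolJlt
        (fun b hb => by
          have hk := key a ha b hb
          rw [Real.norm_eq_abs]
          calc |∫ t in Icc t₀ T, K (a + t) (b + t)|
              = |L + ((∫ t in Icc t₀ T, K (a + t) (b + t)) - L)| := by congr 1; ring
            _ ≤ |L| + |(∫ t in Icc t₀ T, K (a + t) (b + t)) - L| := abs_add_le _ _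
            _ ≤ |L| + η/2 := by linarith)
      rw [measureReal_def, hvolJ] at hbnd
      exact hbnd
    have hOuter :
        |(∫ a in Icc (-ε) ε, ∫ b in Icc (-ε) ε, ∫ t in Icc t₀ T, K (a + t) (b + t))
          - (2*ε)*((2*ε)*L)| ≤ ((η/2) * (2*ε)) * (2*ε) := by
      have heq : (∫ a in Icc (-ε) ε, ∫ b in Icc (-ε) ε, ∫ t in Icc t₀ T, K (a + t) (b + t))
          - (2*ε)*((2*ε)*L)
          = ∫ a in Icc (-ε) ε,
              ((∫ b in Icc (-ε) ε, ∫ t in Icc t₀ T, K (a + t) (b + t)) - (2*ε)*L) := by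
        rw [integral_sub hinth (integrable_const ((2*ε)*L)), integral_const,
          measureReal_restrict_apply_univ, measureReal_def, hvolJ, smul_eq_mul]
      rw [heq]
      have hbnd := norm_setIntegral_le_of_norm_le_const (μ := volume) (s := Icc (-ε) ε)
        (C := (η/2) * (2*ε)) hvolJlt
        (fun a ha => by rw [Real.norm_eq_abs]; exact hInner a ha)
      rw [Real.norm_eq_abs, measureReal_def, hvolJ] at hbnd
      exact hbnd
    rw [Real.dist_eq]
    have h4 : (1/(4*ε^2)) * ((2*ε)*((2*ε)*L)) = L := by
      field_simp
      ring
    have hrw : (1/(4*ε^2)) *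
        (∫ a in Icc (-ε) ε, ∫ b in Icc (-ε) ε, ∫ t in Icc t₀ T, K (a + t) (b + t)) - L
        = (1/(4*ε^2)) *
          ((∫ a in Icc (-ε) ε, ∫ b in Icc (-ε) ε, ∫ t in Icc t₀ T, K (a + t) (b + t))
            - (2*ε)*((2*ε)*L)) := by
      rw [mul_sub, h4]
    rw [hrw, abs_mul, abs_of_pos (show (0:ℝ) < 1/(4*ε^2) by positivity)]
    calc (1/(4*ε^2)) *
        |(∫ a in Icc (-ε) ε, ∫ b in Icc (-ε) ε, ∫ t in Icc t₀ T, K (a + t) (b + t))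
          - (2*ε)*((2*ε)*L)|
        ≤ (1/(4*ε^2)) * (((η/2) * (2*ε)) * (2*ε)) := by
          exact mul_le_mul_of_nonneg_left hOuter (by positivity)
      _ = η/2 := by field_simp; ring
      _ < η := by linarith
  refine Tendsto.congr' ?_ hLim
  filter_upwards [self_mem_nhdsWithin] with ε hε
  exact (hId ε hε).symm
end

section
/- Let φ, ψ : [t₀,T] → ℝ be polynomials and {qᵢ} any orthonormal basis of L²([t₀,T]). Then ∑_{i=0}^∞ [ ∫_{t₀}^{T} φ(t)qᵢ(t)(∫_{t₀}^{t} ψ(τ)qᵢ(τ)dτ)dt + ∫_{t₀}^{T} ψ(t)qᵢ(t)(∫_{t₀}^{t} φ(τ)qᵢ(τ)dτ)dt ] = ∫_{t₀}^{T} φ(t)ψ(t)dt, with absolute convergence of the series. -/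
open MeasureTheory Set

private lemma key_fubini {μ : Measure ℝ} [IsFiniteMeasure μ] [NullSingletonClass μ] {h k : ℝ → ℝ}
    (hh : Integrable h μ) (hk : Integrable k μ) :
    (∫ t, h t * (∫ τ in Iic t, k τ ∂μ) ∂μ) + (∫ t, k t * (∫ τ in Iic t, h τ ∂μ) ∂μ)
      = (∫ t, h t ∂μ) * (∫ t, k t ∂μ) := by
  have hsetm : MeasurableSet {p : ℝ × ℝ | p.2 ≤ p.1} :=
    (isClosed_le continuous_snd continuous_fst).measurableSet
  have hint : ∀ (f g : ℝ → ℝ), Integrable f μ → Integrable g μ →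
      Integrable ({p : ℝ × ℝ | p.2 ≤ p.1}.indicator (fun p => f p.1 * g p.2)) (μ.prod μ) := by
    intro f g hf hg
    exact (hf.mul_prod hg).indicator hsetm
  have step : ∀ (f g : ℝ → ℝ), Integrable f μ → Integrable g μ →
      (∫ t, f t * (∫ τ in Iic t, g τ ∂μ) ∂μ)
        = ∫ p, {p : ℝ × ℝ | p.2 ≤ p.1}.indicator (fun p => f p.1 * g p.2) p ∂(μ.prod μ) := by
    intro f g hf hg
    have h1 : Integrable (Function.uncurry fun t τ =>
        {p : ℝ × ℝ | p.2 ≤ p.1}.indicator (fun p => f p.1 * g p.2) (t, τ)) (μ.prod μ) := by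
      have := hint f g hf hg
      apply this.congr
      filter_upwards with p
      simp [Function.uncurry]
    have h2 := integral_integral h1
    have inner_eq : ∀ t, (∫ τ, {p : ℝ × ℝ | p.2 ≤ p.1}.indicator
        (fun p => f p.1 * g p.2) (t, τ) ∂μ) = f t * ∫ τ in Iic t, g τ ∂μ := by
      intro t
      have e : ∀ τ, {p : ℝ × ℝ | p.2 ≤ p.1}.indicator (fun p => f p.1 * g p.2) (t, τ)
          = (Iic t).indicator (fun τ => f t * g τ) τ := by
        intro τ
        by_cases hτ : τ ≤ t <;>
          simp [Set.indicator_apply, hτ, Set.mem_setOf_eq, Set.mem_Iic]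
      simp_rw [e]
      rw [integral_indicator measurableSet_Iic, integral_const_mul]
    rw [← integral_congr_ae (Filter.Eventually.of_forall inner_eq), h2]
  have hdiag : (μ.prod μ) {p : ℝ × ℝ | p.1 = p.2} = 0 := by
    have hm : MeasurableSet {p : ℝ × ℝ | p.1 = p.2} :=
      (isClosed_eq continuous_fst continuous_snd).measurableSet
    rw [Measure.prod_apply hm]
    have : ∀ t : ℝ, μ (Prod.mk t ⁻¹' {p : ℝ × ℝ | p.1 = p.2}) = 0 := by
      intro t
      have : Prod.mk t ⁻¹' {p : ℝ × ℝ | p.1 = p.2} = {t} := by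
        ext τ; simp [eq_comm]
      rw [this, measure_singleton]
    simp [this]
  have hae : ∀ᵐ p ∂(μ.prod μ), p.1 ≠ (p.2 : ℝ) := by
    rw [ae_iff]
    simpa using hdiag
  rw [step h k hh hk, step k h hk hh]
  have hswap : (∫ p, {p : ℝ × ℝ | p.2 ≤ p.1}.indicator (fun p => k p.1 * h p.2) p ∂(μ.prod μ))
      = ∫ p, {p : ℝ × ℝ | p.2 ≤ p.1}.indicator (fun p => k p.1 * h p.2) p.swap ∂(μ.prod μ) :=
    (integral_prod_swap _).symm
  have hI2 : Integrable (fun p : ℝ × ℝ =>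
      {p : ℝ × ℝ | p.2 ≤ p.1}.indicator (fun p => k p.1 * h p.2) p.swap) (μ.prod μ) :=
    (hint k h hk hh).swap
  rw [hswap, ← integral_add (hint h k hh hk) hI2]
  rw [← integral_prod_mul h k]
  apply integral_congr_ae
  filter_upwards [hae] with p hp
  rcases lt_or_gt_of_ne hp with hlt | hlt
  · have h1 : ¬ (p.2 ≤ p.1) := not_le.2 hlt
    have h2 : p.1 ≤ p.2 := hlt.le
    simp [Set.indicator_apply, h1, h2, Prod.swap, mul_comm]
  · have h1 : p.2 ≤ p.1 := hlt.le
    have h2 : ¬ (p.1 ≤ p.2) := not_le.2 hlt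
    simp [Set.indicator_apply, h1, h2, Prod.swap]

theorem stmt_12 (t₀ T : ℝ) (ht : t₀ < T) (φ ψ : Polynomial ℝ)
    (q : HilbertBasis ℕ ℝ (Lp ℝ 2 (volume.restrict (Icc t₀ T)))) :
    Summable
      (fun i : ℕ => |(∫ t in Icc t₀ T, φ.eval t * (q i : Lp ℝ 2 (volume.restrict (Icc t₀ T))) t *
            ∫ τ in Icc t₀ t, ψ.eval τ * (q i : Lp ℝ 2 (volume.restrict (Icc t₀ T))) τ)
          + ∫ t in Icc t₀ T, ψ.eval t * (q i : Lp ℝ 2 (volume.restrict (Icc t₀ T))) t *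
            ∫ τ in Icc t₀ t, φ.eval τ * (q i : Lp ℝ 2 (volume.restrict (Icc t₀ T))) τ|) ∧
    HasSum
      (fun i : ℕ =>
        (∫ t in Icc t₀ T, φ.eval t * (q i : Lp ℝ 2 (volume.restrict (Icc t₀ T))) t *
            ∫ τ in Icc t₀ t, ψ.eval τ * (q i : Lp ℝ 2 (volume.restrict (Icc t₀ T))) τ)
          + ∫ t in Icc t₀ T, ψ.eval t * (q i : Lp ℝ 2 (volume.restrict (Icc t₀ T))) t *
            ∫ τ in Icc t₀ t, φ.eval τ * (q i : Lp ℝ 2 (volume.restrict (Icc t₀ T))) τ)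
      (∫ t in Icc t₀ T, φ.eval t * ψ.eval t) := by
  haveI hfin : IsFiniteMeasure (volume.restrict (Icc t₀ T)) :=
    ⟨by rw [Measure.restrict_apply_univ, Real.volume_Icc]; exact ENNReal.ofReal_lt_top⟩
  obtain ⟨Cφ, hCφ⟩ := (isCompact_Icc (a := t₀) (b := T)).exists_bound_of_continuousOn
    φ.continuous.continuousOn
  obtain ⟨Cψ, hCψ⟩ := (isCompact_Icc (a := t₀) (b := T)).exists_bound_of_continuousOn
    ψ.continuous.continuousOn
  have hφm : MemLp (fun t => φ.eval t) 2 (volume.restrict (Icc t₀ T)) :=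
    MemLp.of_bound (φ.continuous.aestronglyMeasurable) Cφ
      ((ae_restrict_mem measurableSet_Icc).mono fun x hx => hCφ x hx)
  have hψm : MemLp (fun t => ψ.eval t) 2 (volume.restrict (Icc t₀ T)) :=
    MemLp.of_bound (ψ.continuous.aestronglyMeasurable) Cψ
      ((ae_restrict_mem measurableSet_Icc).mono fun x hx => hCψ x hx)
  set Φ : Lp ℝ 2 (volume.restrict (Icc t₀ T)) := hφm.toLp _ with hΦdef
  set Ψ : Lp ℝ 2 (volume.restrict (Icc t₀ T)) := hψm.toLp _ with hΨdef
  have hcoeΦ : (Φ : ℝ → ℝ) =ᵐ[volume.restrict (Icc t₀ T)] fun t => φ.eval t := hφm.coeFn_toLp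
  have hcoeΨ : (Ψ : ℝ → ℝ) =ᵐ[volume.restrict (Icc t₀ T)] fun t => ψ.eval t := hψm.coeFn_toLp
  have hxi : ∀ i, (∫ t in Icc t₀ T, φ.eval t * (q i : Lp ℝ 2 (volume.restrict (Icc t₀ T))) t)
      = (inner ℝ Φ (q i) : ℝ) := by
    intro i
    rw [L2.inner_def]
    apply integral_congr_ae
    filter_upwards [hcoeΦ] with t htc
    simp [RCLike.inner_apply, mul_comm, htc]
  have hyi : ∀ i, (∫ t in Icc t₀ T, ψ.eval t * (q i : Lp ℝ 2 (volume.restrict (Icc t₀ T))) t)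
      = (inner ℝ Ψ (q i) : ℝ) := by
    intro i
    rw [L2.inner_def]
    apply integral_congr_ae
    filter_upwards [hcoeΨ] with t htc
    simp [RCLike.inner_apply, mul_comm, htc]
  have hhint : ∀ i, Integrable
      (fun t => φ.eval t * (q i : Lp ℝ 2 (volume.restrict (Icc t₀ T))) t)
      (volume.restrict (Icc t₀ T)) := by
    intro i
    refine (L2.integrable_inner (𝕜 := ℝ) Φ (q i)).congr ?_
    filter_upwards [hcoeΦ] with t htc
    simp [RCLike.inner_apply, mul_comm, htc]
  have hkint : ∀ i, Integrable
      (fun t => ψ.eval t * (q i : Lp ℝ 2 (volume.restrict (Icc t₀ T))) t)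
      (volume.restrict (Icc t₀ T)) := by
    intro i
    refine (L2.integrable_inner (𝕜 := ℝ) Ψ (q i)).congr ?_
    filter_upwards [hcoeΨ] with t htc
    simp [RCLike.inner_apply, mul_comm, htc]
  have innrw : ∀ (k : ℝ → ℝ) (t : ℝ), t ∈ Icc t₀ T →
      (∫ τ in Icc t₀ t, k τ) = ∫ τ in Iic t, k τ ∂(volume.restrict (Icc t₀ T)) := by
    intro k t htI
    have hset : Iic t ∩ Icc t₀ T = Icc t₀ t := by
      ext τ
      simp only [mem_inter_iff, mem_Iic, mem_Icc]
      constructor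
      · rintro ⟨h1, h2, h3⟩; exact ⟨h2, h1⟩
      · rintro ⟨h1, h2⟩; exact ⟨h2, h1, h2.trans htI.2⟩
    rw [Measure.restrict_restrict measurableSet_Iic, hset]
  have key_i : ∀ i,
      (∫ t in Icc t₀ T, φ.eval t * (q i : Lp ℝ 2 (volume.restrict (Icc t₀ T))) t *
            ∫ τ in Icc t₀ t, ψ.eval τ * (q i : Lp ℝ 2 (volume.restrict (Icc t₀ T))) τ)
          + (∫ t in Icc t₀ T, ψ.eval t * (q i : Lp ℝ 2 (volume.restrict (Icc t₀ T))) t *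
            ∫ τ in Icc t₀ t, φ.eval τ * (q i : Lp ℝ 2 (volume.restrict (Icc t₀ T))) τ)
        = (inner ℝ Φ (q i) : ℝ) * (inner ℝ Ψ (q i) : ℝ) := by
    intro i
    have e1 : (∫ t in Icc t₀ T, φ.eval t * (q i : Lp ℝ 2 (volume.restrict (Icc t₀ T))) t *
            ∫ τ in Icc t₀ t, ψ.eval τ * (q i : Lp ℝ 2 (volume.restrict (Icc t₀ T))) τ)
        = ∫ t, (φ.eval t * (q i : Lp ℝ 2 (volume.restrict (Icc t₀ T))) t) *
            (∫ τ in Iic t, (ψ.eval τ * (q i : Lp ℝ 2 (volume.restrict (Icc t₀ T))) τ)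
              ∂(volume.restrict (Icc t₀ T))) ∂(volume.restrict (Icc t₀ T)) := by
      apply integral_congr_ae
      filter_upwards [ae_restrict_mem measurableSet_Icc] with t htI
      rw [innrw _ t htI]
    have e2 : (∫ t in Icc t₀ T, ψ.eval t * (q i : Lp ℝ 2 (volume.restrict (Icc t₀ T))) t *
            ∫ τ in Icc t₀ t, φ.eval τ * (q i : Lp ℝ 2 (volume.restrict (Icc t₀ T))) τ)
        = ∫ t, (ψ.eval t * (q i : Lp ℝ 2 (volume.restrict (Icc t₀ T))) t) *
            (∫ τ in Iic t, (φ.eval τ * (q i : Lp ℝ 2 (volume.restrict (Icc t₀ T))) τ)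
              ∂(volume.restrict (Icc t₀ T))) ∂(volume.restrict (Icc t₀ T)) := by
      apply integral_congr_ae
      filter_upwards [ae_restrict_mem measurableSet_Icc] with t htI
      rw [innrw _ t htI]
    rw [e1, e2, key_fubini (hhint i) (hkint i), hxi i, hyi i]
  have hsum2 : HasSum (fun i => (inner ℝ Φ (q i) : ℝ) * (inner ℝ Ψ (q i) : ℝ)) (inner ℝ Φ Ψ : ℝ) := by
    have h := q.hasSum_inner_mul_inner Φ Ψ
    have h2 : ∀ i, (inner ℝ (q i) Ψ : ℝ) = (inner ℝ Ψ (q i) : ℝ) := fun i => real_inner_comm _ _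
    simpa [h2] using h
  have hΦΨ : (inner ℝ Φ Ψ : ℝ) = ∫ t in Icc t₀ T, φ.eval t * ψ.eval t := by
    rw [L2.inner_def]
    apply integral_congr_ae
    filter_upwards [hcoeΦ, hcoeΨ] with t h1 h2
    simp [RCLike.inner_apply, mul_comm, h1, h2]
  have hsq1 : Summable (fun i => (inner ℝ Φ (q i) : ℝ) ^ 2) := by
    refine (q.hasSum_inner_mul_inner Φ Φ).summable.congr fun i => ?_
    rw [real_inner_comm (q i) Φ, sq]
  have hsq2 : Summable (fun i => (inner ℝ Ψ (q i) : ℝ) ^ 2) := by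
    refine (q.hasSum_inner_mul_inner Ψ Ψ).summable.congr fun i => ?_
    rw [real_inner_comm (q i) Ψ, sq]
  have habs : Summable (fun i => |(inner ℝ Φ (q i) : ℝ) * (inner ℝ Ψ (q i) : ℝ)|) := by
    refine Summable.of_nonneg_of_le (fun i => abs_nonneg _) (fun i => ?_) (hsq1.add hsq2)
    rw [abs_mul]
    nlinarith [sq_nonneg (|(inner ℝ Φ (q i) : ℝ)| - |(inner ℝ Ψ (q i) : ℝ)|),
      sq_abs (inner ℝ Φ (q i) : ℝ), sq_abs (inner ℝ Ψ (q i) : ℝ)]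
  constructor
  · exact habs.congr fun i => by rw [key_i i]
  · rw [← hΦΨ]
    simp only [key_i]
    exact hsum2
end
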